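/- Fix α ∈ ℂ. The image of the derivation algebra of A_α under the matrix exponential equals the automorphism group of A_α: for every automorphism σ of the ω-Lie algebra A_α there exists a derivation d of A_α with exp(d) = σ, and conversely exp(d) is an automorphism of A_α for every derivation d of A_α. (Here derivations and automorphisms are identified with their 3×3 complex matrices relative to the basis x, y, z, and exp denotes the matrix exponential.) -/

import Mathlib

noncomputable section

/-- The underlying space ℂ³ of the ω-Lie algebra A_α. -/
abbrev V3 : Type := Fin 3 → ℂ

/-- The basis vector x = e₁. -/
def vx : V3 := ![1, 0, 0]

/-- The basis vector y = e₂. -/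
def vy : V3 := ![0, 1, 0]

/-- The basis vector z = e₃. -/
def vz : V3 := ![0, 0, 1]

/-- A 3×3 complex matrix is (identified with) a derivation of the bracket `b`. -/
def IsDerMat (b : V3 →ₗ[ℂ] V3 →ₗ[ℂ] V3) (A : Matrix (Fin 3) (Fin 3) ℂ) : Prop :=
  ∀ u v : V3,
    Matrix.toLin' A (b u v) = b (Matrix.toLin' A u) v + b u (Matrix.toLin' A v)

/-- A 3×3 complex matrix is (identified with) an automorphism of the bracket `b`. -/
def IsAutMat (b : V3 →ₗ[ℂ] V3 →ₗ[ℂ] V3) (A : Matrix (Fin 3) (Fin 3) ℂ) : Prop :=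
  Function.Bijective (Matrix.toLin' A) ∧
    ∀ u v : V3, Matrix.toLin' A (b u v) = b (Matrix.toLin' A u) (Matrix.toLin' A v)

lemma exp_of_cube_eq_zero (A : Matrix (Fin 3) (Fin 3) ℂ) (h : A ^ 3 = 0) :
    NormedSpace.exp A = 1 + A + (2:ℂ)⁻¹ • A ^ 2 := by
  rw [NormedSpace.exp_eq_tsum (𝕂 := ℂ)]; beta_reduce
  rw [tsum_eq_sum (s := Finset.range 3) (fun n hn => by
    have h3 : 3 ≤ n := by simpa using hn
    have hz : A ^ n = 0 := by
      calc A ^ n = A ^ 3 * A ^ (n - 3) := by rw [← pow_add]; congr 1; omega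
      _ = 0 := by rw [h, zero_mul]
    simp [hz])]
  simp [Finset.sum_range_succ, Nat.factorial]

lemma mulVec3 (M : Matrix (Fin 3) (Fin 3) ℂ) (w : V3) :
    Matrix.toLin' M w = ![M 0 0 * w 0 + M 0 1 * w 1 + M 0 2 * w 2,
      M 1 0 * w 0 + M 1 1 * w 1 + M 1 2 * w 2,
      M 2 0 * w 0 + M 2 1 * w 1 + M 2 2 * w 2] := by
  funext i
  fin_cases i <;>
    simp [Matrix.toLin'_apply, Matrix.mulVec, dotProduct, Fin.sum_univ_three]

/-- The one-parameter family of automorphism matrices. -/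
def Emat (t : ℂ) : Matrix (Fin 3) (Fin 3) ℂ := ![![1, 2*t, 2*t^2+t], ![0, 1, 2*t], ![0, 0, 1]]

/-- The one-parameter family of derivation matrices. -/
def Dmat (t : ℂ) : Matrix (Fin 3) (Fin 3) ℂ := ![![0, 2*t, t], ![0, 0, 2*t], ![0, 0, 0]]

section main

variable (α : ℂ) (b : V3 →ₗ[ℂ] V3 →ₗ[ℂ] V3)
  (hskew : ∀ u v : V3, b u v = - b v u)
  (hxy : b vx vy = vx) (hxz : b vx vz = vx + vy) (hyz : b vy vz = vz + α • vx)

include hskew hxy hxz hyz in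
lemma bform : ∀ u v : V3, b u v =
      ![u 0 * v 1 - u 1 * v 0 + (u 0 * v 2 - u 2 * v 0) + α * (u 1 * v 2 - u 2 * v 1),
        u 0 * v 2 - u 2 * v 0,
        u 1 * v 2 - u 2 * v 1] := by
  have hdiag : ∀ w : V3, b w w = 0 := by
    intro w
    have h := hskew w w
    rw [eq_neg_iff_add_eq_zero, ← two_smul ℂ] at h
    exact (smul_eq_zero.mp h).resolve_left (by norm_num)
  have hyx : b vy vx = -vx := by rw [hskew, hxy]
  have hzx : b vz vx = -(vx + vy) := by rw [hskew, hxz]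
  have hzy : b vz vy = -(vz + α • vx) := by rw [hskew, hyz]
  intro u v
  have hu : ∀ w : V3, w = w 0 • vx + w 1 • vy + w 2 • vz := by
    intro w; funext i; fin_cases i <;> simp [vx, vy, vz]
  calc b u v = b (u 0 • vx + u 1 • vy + u 2 • vz) (v 0 • vx + v 1 • vy + v 2 • vz) := by
        rw [← hu u, ← hu v]
    _ = _ := by
        simp only [map_add, map_smul, LinearMap.add_apply, LinearMap.smul_apply,
          hxy, hxz, hyz, hyx, hzx, hzy, hdiag]
        funext i
        fin_cases i <;> simp [vx, vy, vz] <;> ring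

include hskew hxy hxz hyz in
lemma aut_Emat (t : ℂ) : IsAutMat b (Emat t) := by
  have hb := bform α b hskew hxy hxz hyz
  have hinv1 : Emat t * Emat (-t) = 1 := by
    ext i j
    fin_cases i <;> fin_cases j <;>
      simp only [Matrix.mul_apply, Fin.sum_univ_three] <;> simp [Emat, Matrix.one_apply, Matrix.vecHead, Matrix.vecTail] <;> ring
  have hinv2 : Emat (-t) * Emat t = 1 := by
    ext i j
    fin_cases i <;> fin_cases j <;>
      simp only [Matrix.mul_apply, Fin.sum_univ_three] <;> simp [Emat, Matrix.one_apply, Matrix.vecHead, Matrix.vecTail] <;> ring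
  constructor
  · refine Function.bijective_iff_has_inverse.mpr ⟨Matrix.toLin' (Emat (-t)), fun u => ?_, fun u => ?_⟩
    · rw [← LinearMap.comp_apply, ← Matrix.toLin'_mul, hinv2, Matrix.toLin'_one,
        LinearMap.id_apply]
    · rw [← LinearMap.comp_apply, ← Matrix.toLin'_mul, hinv1, Matrix.toLin'_one,
        LinearMap.id_apply]
  · intro u v
    rw [hb u v, mulVec3, mulVec3 (Emat t) u, mulVec3 (Emat t) v, hb]
    funext i
    fin_cases i <;> simp [Emat, Matrix.vecHead, Matrix.vecTail] <;> ring

include hskew hxy hxz hyz in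
lemma der_Dmat (t : ℂ) : IsDerMat b (Dmat t) := by
  have hb := bform α b hskew hxy hxz hyz
  intro u v
  rw [hb u v, mulVec3, mulVec3 (Dmat t) u, mulVec3 (Dmat t) v, hb, hb]
  funext i
  fin_cases i <;> simp [Dmat, Matrix.vecHead, Matrix.vecTail] <;> ring

lemma exp_Dmat (t : ℂ) : NormedSpace.exp (Dmat t) = Emat t := by
  have h3 : Dmat t ^ 3 = 0 := by
    ext i j
    fin_cases i <;> fin_cases j <;>
      simp only [pow_succ, pow_zero, one_mul, Matrix.mul_apply, Fin.sum_univ_three] <;> simp [Dmat, pow_succ, Matrix.mul_apply, Fin.sum_univ_three, Matrix.vecHead, Matrix.vecTail]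
  rw [exp_of_cube_eq_zero _ h3]
  ext i j
  fin_cases i <;> fin_cases j <;>
    simp only [Matrix.add_apply, Matrix.smul_apply, pow_two, Matrix.mul_apply, Fin.sum_univ_three] <;> simp [Dmat, Emat, pow_two, Matrix.mul_apply, Fin.sum_univ_three, Matrix.one_apply,
      Matrix.vecHead, Matrix.vecTail] <;> ring

end main

/-- The image of the derivation algebra of the ω-Lie algebra A_α (with
`[x,y] = x`, `[x,z] = x + y`, `[y,z] = z + α•x`) under the matrix exponential is exactly
the automorphism group of A_α: the exponential of every derivation is an automorphism,
and every automorphism is the exponential of some derivation. -/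
theorem exp_derivations_eq_automorphisms_A_alpha (α : ℂ)
    (b : V3 →ₗ[ℂ] V3 →ₗ[ℂ] V3)
    (hskew : ∀ u v : V3, b u v = - b v u)
    (hxy : b vx vy = vx) (hxz : b vx vz = vx + vy) (hyz : b vy vz = vz + α • vx) :
    (∀ A : Matrix (Fin 3) (Fin 3) ℂ, IsDerMat b A → IsAutMat b (NormedSpace.exp A)) ∧
    (∀ B : Matrix (Fin 3) (Fin 3) ℂ, IsAutMat b B →
      ∃ A : Matrix (Fin 3) (Fin 3) ℂ, IsDerMat b A ∧ NormedSpace.exp A = B) := by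
  have hb := bform α b hskew hxy hxz hyz
  constructor
  · -- derivations exponentiate to automorphisms
    intro A hA
    -- extract the nine scalar equations
    have hcx : Matrix.toLin' A vx = ![A 0 0, A 1 0, A 2 0] := by
      rw [mulVec3]; funext i; fin_cases i <;> simp [vx]
    have hcy : Matrix.toLin' A vy = ![A 0 1, A 1 1, A 2 1] := by
      rw [mulVec3]; funext i; fin_cases i <;> simp [vy]
    have hcz : Matrix.toLin' A vz = ![A 0 2, A 1 2, A 2 2] := by
      rw [mulVec3]; funext i; fin_cases i <;> simp [vz]
    have d1 := hA vx vy
    have d2 := hA vx vz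
    have d3 := hA vy vz
    simp only [hxy, hxz, hyz, map_add, map_smul, hcx, hcy, hcz, hb] at d1 d2 d3
    have q1 := congrFun d1 0
    have q2 := congrFun d1 1
    have q3 := congrFun d1 2
    have q4 := congrFun d2 0
    have q5 := congrFun d2 1
    have q6 := congrFun d2 2
    have q7 := congrFun d3 0
    have q8 := congrFun d3 1
    have q9 := congrFun d3 2
    simp [vx, vy, vz] at q1 q2 q3 q4 q5 q6 q7 q8 q9
    have h20 : A 2 0 = 0 := by linear_combination (1/2 : ℂ) * q3
    have h11 : A 1 1 = 0 := by linear_combination -q9 + α * h20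
    have h21 : A 2 1 = 0 := by linear_combination -q1 - h11 + α * h20
    have h10 : A 1 0 = 0 := by linear_combination q2 + h21
    have h12 : A 1 2 = A 0 1 := by linear_combination q8 - α * h10
    have h22 : A 2 2 = 0 := by linear_combination -q4 - α * h10 - h12
    have h00 : A 0 0 = 0 := by linear_combination -q5 + h10 + h11 - h22
    have h01 : A 0 1 = 2 * A 0 2 := by linear_combination -q7 + α * h00 - α * h11 - α * h22
    have hAeq : A = Dmat (A 0 2) := by
      ext i j
      fin_cases i <;> fin_cases j <;> simp [Dmat, Matrix.vecHead, Matrix.vecTail] <;>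
        first
          | rfl
          | linear_combination h00
          | linear_combination h01
          | linear_combination h10
          | linear_combination h11
          | linear_combination h12 + h01
          | linear_combination h20
          | linear_combination h21
          | linear_combination h22
    rw [hAeq, exp_Dmat]
    exact aut_Emat α b hskew hxy hxz hyz _
  · -- automorphisms are exponentials of derivations
    intro B hB
    obtain ⟨hbij, haut⟩ := hB
    have hcx : Matrix.toLin' B vx = ![B 0 0, B 1 0, B 2 0] := by
      rw [mulVec3]; funext i; fin_cases i <;> simp [vx]
    have hcy : Matrix.toLin' B vy = ![B 0 1, B 1 1, B 2 1] := by
      rw [mulVec3]; funext i; fin_cases i <;> simp [vy]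
    have hcz : Matrix.toLin' B vz = ![B 0 2, B 1 2, B 2 2] := by
      rw [mulVec3]; funext i; fin_cases i <;> simp [vz]
    have d1 := haut vx vy
    have d2 := haut vx vz
    have d3 := haut vy vz
    simp only [hxy, hxz, hyz, map_add, map_smul, hcx, hcy, hcz, hb] at d1 d2 d3
    have q1 := congrFun d1 0
    have q2 := congrFun d1 1
    have q3 := congrFun d1 2
    have q4 := congrFun d2 0
    have q5 := congrFun d2 1
    have q6 := congrFun d2 2
    have q7 := congrFun d3 0
    have q8 := congrFun d3 1
    have q9 := congrFun d3 2
    simp [vx, vy, vz] at q1 q2 q3 q4 q5 q6 q7 q8 q9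
    -- notation: a1 = B 0 0, a2 = B 1 0, a3 = B 2 0, b1 = B 0 1, b2 = B 1 1, b3 = B 2 1,
    --           c1 = B 0 2, c2 = B 1 2, c3 = B 2 2
    -- the nine polynomial equations, cleaned up
    have e1 : B 1 0 - B 0 0 * B 2 1 + B 2 0 * B 0 1 = 0 := by linear_combination q2
    have e2 : B 2 0 - B 1 0 * B 2 1 + B 2 0 * B 1 1 = 0 := by linear_combination q3
    have e3 : B 0 0 - B 1 0 - α * B 2 0 - B 0 0 * B 1 1 + B 1 0 * B 0 1 = 0 := by
      linear_combination q1 - q2 - α * q3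
    have e4 : B 1 0 + B 1 1 - B 0 0 * B 2 2 + B 2 0 * B 0 2 = 0 := by linear_combination q5
    have e5 : B 2 0 + B 2 1 - B 1 0 * B 2 2 + B 2 0 * B 1 2 = 0 := by linear_combination q6
    have e6 : B 0 0 + B 0 1 - B 1 0 - B 1 1 - α * B 2 0 - α * B 2 1 - B 0 0 * B 1 2
        + B 1 0 * B 0 2 = 0 := by linear_combination q4 - q5 - α * q6
    have e7 : B 1 2 + α * B 1 0 - B 0 1 * B 2 2 + B 2 1 * B 0 2 = 0 := by linear_combination q8
    have e8 : B 2 2 + α * B 2 0 - B 1 1 * B 2 2 + B 2 1 * B 1 2 = 0 := by linear_combination q9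
    have e9 : B 0 2 + α * B 0 0 - B 1 2 - α * B 1 0 - α * B 2 2 - α * α * B 2 0
        - B 0 1 * B 1 2 + B 1 1 * B 0 2 = 0 := by linear_combination q7 - q8 - α * q9
    -- step 1: the key minor vanishes
    have hT : B 1 0 * B 2 1 - B 2 0 * B 1 1 = 0 := by
      linear_combination (B 1 0 + B 1 1) * e1 - (B 0 0 + B 0 1) * e2 - (B 2 0 + B 2 1) * e3
        - B 1 0 * e4 + B 0 0 * e5 + B 2 0 * e6
    have ha3 : B 2 0 = 0 := by linear_combination e2 + hT
    have ha2sq : B 1 0 * B 1 0 = 0 := by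
      linear_combination B 1 0 * e1 + B 0 0 * hT + (B 0 0 * B 1 1 - B 1 0 * B 0 1) * ha3
    have ha2 : B 1 0 = 0 := by
      have := mul_self_eq_zero.mp ha2sq
      exact this
    have hb3 : B 2 1 = 0 := by
      linear_combination e5 - (1 + B 1 2) * ha3 + B 2 2 * ha2
    have ha1ne : B 0 0 ≠ 0 := by
      intro h0
      have hcol : Matrix.toLin' B vx = Matrix.toLin' B 0 := by
        rw [hcx, map_zero]
        funext i; fin_cases i <;> simp [h0, ha2, ha3]
      have : vx = 0 := hbij.1 hcol
      have := congrFun this 0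
      simp [vx] at this
    have hb2 : B 1 1 = 1 := by
      have h : B 0 0 * (1 - B 1 1) = 0 := by
        linear_combination e3 + (1 - B 0 1) * ha2 + α * ha3
      rcases mul_eq_zero.mp h with h' | h'
      · exact absurd h' ha1ne
      · linear_combination -h'
    have hc3 : B 0 0 * B 2 2 = 1 := by
      linear_combination -e4 + ha2 + B 0 2 * ha3 + hb2
    have hc2 : B 1 2 - B 0 1 * B 2 2 = 0 := by
      linear_combination e7 - α * ha2 - B 0 2 * hb3
    have ha1 : B 0 0 = 1 := by
      linear_combination e6 + α * ha3 + (1 - B 0 2) * ha2 + α * hb3 + hb2 + B 0 1 * hc3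
        + B 0 0 * hc2
    have hc3' : B 2 2 = 1 := by linear_combination hc3 - B 2 2 * ha1
    have hb1 : B 0 1 = B 1 2 := by linear_combination -hc2 - B 0 1 * hc3'
    have hc1 : 2 * B 0 2 = B 1 2 + B 1 2 * B 1 2 := by
      linear_combination e9 - α * ha1 + α * ha2 + α * hc3' + α * α * ha3 + B 1 2 * hb1
        - B 0 2 * hb2
    refine ⟨Dmat (B 1 2 / 2), der_Dmat α b hskew hxy hxz hyz _, ?_⟩
    rw [exp_Dmat]
    have hBdec : B = ![![B 0 0, B 0 1, B 0 2], ![B 1 0, B 1 1, B 1 2], ![B 2 0, B 2 1, B 2 2]] := by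
      ext i j
      fin_cases i <;> fin_cases j <;> rfl
    have key : Emat (B 1 2 / 2)
        = ![![B 0 0, B 0 1, B 0 2], ![B 1 0, B 1 1, B 1 2], ![B 2 0, B 2 1, B 2 2]] := by
      ext i j
      fin_cases i <;> fin_cases j <;> simp [Emat, Matrix.vecHead, Matrix.vecTail] <;>
        first
          | ring1
          | linear_combination -ha1
          | linear_combination -hb1
          | linear_combination (-1/2 : ℂ) * hc1
          | linear_combination -ha2
          | linear_combination -hb2
          | linear_combination -ha3
          | linear_combination -hb3
          | linear_combination -hc3'
    exact key.trans hBdec.symm
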